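/- Fix $\varepsilon > 0$ and $L_0, L_1 > 0$ with $\varepsilon \le L_0$. Define $f_2: \mathbb{R} \to \mathbb{R}$ by $f_2(y) = \varepsilon(y-1) + \varepsilon/2$ for $y \ge 1$, $f_2(y) = \frac{\varepsilon}{2} y^2$ for $|y| \le 1$, and $f_2(y) = -\varepsilon(y+1) + \varepsilon/2$ for $y \le -1$. Then $f_2$ is continuously differentiable, $|f_2'(y)| \le \varepsilon$ for all $y$, and $f_2$ satisfies the $(L_0, L_1)$-smooth condition. -/

import Mathlib

noncomputable def f2 (ε : ℝ) (y : ℝ) : ℝ :=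
  if 1 ≤ y then ε * (y - 1) + ε / 2
  else if y ≤ -1 then -ε * (y + 1) + ε / 2
  else ε / 2 * y ^ 2

lemma sqmax_hasDerivAt (a : ℝ) : HasDerivAt (fun t : ℝ => max t 0 ^ 2) (2 * max a 0) a := by
  rcases lt_trichotomy a 0 with h | h | h
  · have : max a 0 = 0 := max_eq_right h.le
    rw [this, mul_zero]
    refine (hasDerivAt_const a 0).congr_of_eventuallyEq ?_
    filter_upwards [eventually_lt_nhds h] with t ht
    simp [max_eq_right ht.le]
  · subst h
    rw [max_self, mul_zero]
    rw [hasDerivAt_iff_isLittleO]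
    simp only [max_self, sub_zero, smul_zero, zero_pow, sub_zero]
    have h1 : (fun t : ℝ => max t 0 ^ 2) =O[nhds 0] fun t => t * t := by
      refine Asymptotics.IsBigO.of_bound 1 ?_
      filter_upwards with t
      have : |max t 0| ≤ |t| := by
        rcases le_total t 0 with ht | ht
        · simp [max_eq_right ht]
        · simp [max_eq_left ht, abs_of_nonneg ht]
      simp only [one_mul, Real.norm_eq_abs]
      calc |max t 0 ^ 2| = |max t 0| * |max t 0| := by rw [sq, abs_mul]
        _ ≤ |t| * |t| := mul_le_mul this this (abs_nonneg _) (abs_nonneg _)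
        _ = |t * t| := (abs_mul t t).symm
    have h2 : (fun t : ℝ => t * t) =o[nhds 0] fun t => t := by
      have : (fun t : ℝ => t) =o[nhds 0] fun _ => (1 : ℝ) :=
        Asymptotics.isLittleO_one_iff ℝ |>.mpr (Filter.tendsto_id)
      simpa using this.mul_isBigO (Asymptotics.isBigO_refl (fun t : ℝ => t) _)
    refine (h1.trans_isLittleO h2).congr' ?_ Filter.EventuallyEq.rfl
    filter_upwards with t
    ring
  · have : max a 0 = a := max_eq_left h.le
    rw [this]
    refine ((hasDerivAt_pow 2 a).congr_of_eventuallyEq ?_).congr_deriv (by ring)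
    filter_upwards [eventually_gt_nhds h] with t ht
    simp [max_eq_left ht.le]

lemma f2_eq (ε : ℝ) : f2 ε = fun y =>
    ε / 2 * y ^ 2 - ε / 2 * max (y - 1) 0 ^ 2 - ε / 2 * max (-y - 1) 0 ^ 2 := by
  funext y
  unfold f2
  rcases le_or_gt 1 y with h | h
  · rw [if_pos h, max_eq_left (by linarith), max_eq_right (by linarith)]
    ring
  · rw [if_neg (not_le.mpr h)]
    rcases le_or_gt y (-1) with h2 | h2
    · rw [if_pos h2, max_eq_right (by linarith), max_eq_left (by linarith)]
      ring
    · rw [if_neg (not_le.mpr h2), max_eq_right (by linarith), max_eq_right (by linarith)]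
      ring

lemma clamp_lip (x y : ℝ) :
    |(x - max (x - 1) 0 + max (-x - 1) 0) - (y - max (y - 1) 0 + max (-y - 1) 0)| ≤ |x - y| := by
  simp only [max_def]
  split_ifs <;>
    (rw [abs_le]; rcases abs_cases (x - y) with ⟨h, _⟩ | ⟨h, _⟩ <;> constructor <;> linarith)

lemma f2_hasDerivAt (ε : ℝ) (y : ℝ) :
    HasDerivAt (f2 ε) (ε * y - ε * max (y - 1) 0 + ε * max (-y - 1) 0) y := by
  rw [f2_eq]
  have h1 : HasDerivAt (fun t : ℝ => ε / 2 * t ^ 2) (ε * y) y := by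
    simpa [mul_comm] using (hasDerivAt_pow 2 y).const_mul (ε / 2) |>.congr_deriv (by ring)
  have h2 : HasDerivAt (fun t : ℝ => ε / 2 * max (t - 1) 0 ^ 2) (ε * max (y - 1) 0) y := by
    have this : HasDerivAt (fun t : ℝ => ε / 2 * max (t - 1) 0 ^ 2) (ε / 2 * (2 * max (y - 1) 0 * 1)) y :=
      ((sqmax_hasDerivAt (y - 1)).comp y ((hasDerivAt_id y).sub_const 1)).const_mul (ε / 2)
    convert this using 1
    ring
  have h3 : HasDerivAt (fun t : ℝ => ε / 2 * max (-t - 1) 0 ^ 2) (-(ε * max (-y - 1) 0)) y := by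
    have hin : HasDerivAt (fun t : ℝ => -t - 1) (-1) y := by
      simpa using ((hasDerivAt_id y).neg.sub_const 1)
    have this : HasDerivAt (fun t : ℝ => ε / 2 * max (-t - 1) 0 ^ 2) (ε / 2 * (2 * max (-y - 1) 0 * -1)) y :=
      ((sqmax_hasDerivAt (-y - 1)).comp y hin).const_mul (ε / 2)
    convert this using 1
    ring
  have this : HasDerivAt (fun t : ℝ => ε / 2 * t ^ 2 - ε / 2 * max (t - 1) 0 ^ 2 - ε / 2 * max (-t - 1) 0 ^ 2)
      (ε * y - ε * max (y - 1) 0 - -(ε * max (-y - 1) 0)) y := (h1.sub h2).sub h3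
  convert this using 1
  ring

lemma f2_deriv (ε : ℝ) (y : ℝ) :
    deriv (f2 ε) y = ε * y - ε * max (y - 1) 0 + ε * max (-y - 1) 0 :=
  (f2_hasDerivAt ε y).deriv

theorem f2_is_L0L1_smooth (ε L0 L1 : ℝ) (hε : 0 < ε) (hL0 : 0 < L0) (hL1 : 0 < L1)
    (hεL0 : ε ≤ L0) :
    ContDiff ℝ 1 (f2 ε) ∧
    (∀ y : ℝ, |deriv (f2 ε) y| ≤ ε) ∧
    (∀ x y : ℝ, |x - y| ≤ 1 / L1 →
      |deriv (f2 ε) x - deriv (f2 ε) y| ≤ (L0 + L1 * |deriv (f2 ε) x|) * |x - y|) := by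
  have hbound : ∀ y : ℝ, |deriv (f2 ε) y| ≤ ε := by
    intro y
    rw [f2_deriv, abs_le]
    rcases le_total (y - 1) 0 with h1 | h1
    · rw [max_eq_right h1]
      rcases le_total (-y - 1) 0 with h2 | h2
      · rw [max_eq_right h2]; constructor <;> nlinarith
      · rw [max_eq_left h2]; constructor <;> nlinarith
    · rw [max_eq_left h1]
      rcases le_total (-y - 1) 0 with h2 | h2
      · rw [max_eq_right h2]; constructor <;> nlinarith
      · rw [max_eq_left h2]; constructor <;> nlinarith
  refine ⟨?_, hbound, ?_⟩
  · rw [contDiff_one_iff_deriv]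
    refine ⟨fun y => (f2_hasDerivAt ε y).differentiableAt, ?_⟩
    have : deriv (f2 ε) = fun y => ε * y - ε * max (y - 1) 0 + ε * max (-y - 1) 0 :=
      funext (f2_deriv ε)
    rw [this]
    fun_prop
  · intro x y _
    rw [f2_deriv, f2_deriv]
    have key : |(ε * x - ε * max (x - 1) 0 + ε * max (-x - 1) 0) -
        (ε * y - ε * max (y - 1) 0 + ε * max (-y - 1) 0)| ≤ ε * |x - y| := by
      have heq : (ε * x - ε * max (x - 1) 0 + ε * max (-x - 1) 0) -
          (ε * y - ε * max (y - 1) 0 + ε * max (-y - 1) 0) =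
          ε * ((x - max (x - 1) 0 + max (-x - 1) 0) - (y - max (y - 1) 0 + max (-y - 1) 0)) := by
        ring
      rw [heq, abs_mul, abs_of_pos hε]
      exact mul_le_mul_of_nonneg_left (clamp_lip x y) hε.le
    have h1 : ε * |x - y| ≤ L0 * |x - y| := mul_le_mul_of_nonneg_right hεL0 (abs_nonneg _)
    have h2 : 0 ≤ L1 * |ε * x - ε * max (x - 1) 0 + ε * max (-x - 1) 0| * |x - y| :=
      mul_nonneg (mul_nonneg hL1.le (abs_nonneg _)) (abs_nonneg _)
    nlinarith [key]
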